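/- Let f : ℝ → ℝ be defined by f(x) = ∑_{m=0}^∞ x^{2m} / (m! · (m+1)!). Then for every real number y, ∫_0^y f(x) · f(y-x) dx = f'(y), where f' denotes the derivative of f. -/

import Mathlib

open intervalIntegral MeasureTheory Finset

noncomputable def aterm (m : ℕ) (x : ℝ) : ℝ :=
  x ^ (2 * m) / ((Nat.factorial m : ℝ) * (Nat.factorial (m + 1) : ℝ))

noncomputable def dterm (m : ℕ) (x : ℝ) : ℝ :=
  (2 * m : ℝ) * x ^ (2 * m - 1) / ((Nat.factorial m : ℝ) * (Nat.factorial (m + 1) : ℝ))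

lemma beta_mono (m n : ℕ) (y : ℝ) :
    ∫ x in (0:ℝ)..y, x ^ m * (y - x) ^ n
      = (m.factorial * n.factorial / (m + n + 1).factorial : ℝ) * y ^ (m + n + 1) := by
  induction n generalizing m with
  | zero =>
    rw [show m + 0 + 1 = m + 1 from rfl]
    simp only [pow_zero, mul_one, integral_pow, Nat.factorial_zero, Nat.cast_one,
      Nat.factorial_succ, Nat.cast_mul, Nat.cast_add, Nat.cast_one]
    have c1 : ((m:ℝ)+1) ≠ 0 := by positivity
    have c2 : (Nat.factorial m : ℝ) ≠ 0 := by positivity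
    field_simp
    ring
  | succ n ih =>
    have hu : ∀ x ∈ Set.uIcc (0:ℝ) y, HasDerivAt (fun x => (y - x) ^ (n+1))
        (-((n+1) * (y - x) ^ n)) x := by
      intro x _
      have h1 : HasDerivAt (fun x : ℝ => y - x) (-1) x := by
        simpa using (hasDerivAt_id x).const_sub y
      have := (hasDerivAt_pow (n+1) (y - x)).comp x h1
      refine this.congr_deriv ?_
      push_cast; ring
    have hv : ∀ x ∈ Set.uIcc (0:ℝ) y, HasDerivAt (fun x : ℝ => x ^ (m+1) / (m+1))
        (x ^ m) x := by
      intro x _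
      have := (hasDerivAt_pow (m+1) x).div_const (m+1)
      refine this.congr_deriv ?_
      have : ((m:ℝ) + 1) ≠ 0 := by positivity
      field_simp
      simp
    have hInt1 : IntervalIntegrable (fun x : ℝ => -((n+1) * (y - x) ^ n)) volume 0 y :=
      (Continuous.intervalIntegrable (by continuity) 0 y)
    have hInt2 : IntervalIntegrable (fun x : ℝ => x ^ m) volume 0 y :=
      (Continuous.intervalIntegrable (by continuity) 0 y)
    have key := intervalIntegral.integral_mul_deriv_eq_deriv_mul hu hv hInt1 hInt2
    have lhs_eq : (∫ x in (0:ℝ)..y, x ^ m * (y - x) ^ (n+1))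
        = ∫ x in (0:ℝ)..y, (y - x) ^ (n+1) * x ^ m := by
      congr 1; ext x; ring
    have e2 : (∫ x in (0:ℝ)..y, -((n+1:ℝ) * (y - x) ^ n) * (x ^ (m+1) / (m+1)))
        = (-((n+1:ℝ)/(m+1))) * ∫ x in (0:ℝ)..y, x ^ (m+1) * (y - x) ^ n := by
      rw [← intervalIntegral.integral_const_mul]
      congr 1; ext x
      have : ((m:ℝ) + 1) ≠ 0 := by positivity
      field_simp
    rw [lhs_eq, key, e2, ih (m+1), Nat.factorial_succ m]
    rw [show m + 1 + n + 1 = m + (n + 1) + 1 from by omega]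
    rw [show m + (n+1) + 1 = (m+n+1)+1 from by omega, Nat.factorial_succ (m+n+1),
      Nat.factorial_succ n]
    have c1 : ((m:ℝ)+1) ≠ 0 := by positivity
    have c3 : (Nat.factorial (m+n+1) : ℝ) ≠ 0 := by positivity
    have c4 : ((m:ℝ)+(n:ℝ)+2) ≠ 0 := by positivity
    simp only [sub_self, sub_zero, zero_pow (Nat.succ_ne_zero n), zero_pow (Nat.succ_ne_zero m),
      Nat.cast_mul, Nat.cast_add, Nat.cast_one, zero_mul, zero_div, mul_zero, zero_sub]
    field_simp

lemma cat_fact (m : ℕ) :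
    catalan m * (m.factorial * (m+1).factorial) = (2*m).factorial := by
  have h1 := succ_mul_catalan_eq_centralBinom m
  have h2 : Nat.centralBinom m * m.factorial * m.factorial = (2*m).factorial := by
    rw [Nat.centralBinom]
    have := Nat.choose_mul_factorial_mul_factorial (n := 2*m) (k := m) (by omega)
    rwa [show 2*m - m = m from by omega] at this
  rw [Nat.factorial_succ]
  calc catalan m * (m.factorial * ((m+1) * m.factorial))
      = ((m+1) * catalan m) * m.factorial * m.factorial := by ring
    _ = Nat.centralBinom m * m.factorial * m.factorial := by rw [h1]
    _ = (2*m).factorial := h2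

lemma cat_fact_real (m : ℕ) :
    (catalan m : ℝ) * ((m.factorial : ℝ) * ((m+1).factorial : ℝ)) = ((2*m).factorial : ℝ) := by
  exact_mod_cast congrArg (Nat.cast (R := ℝ)) (cat_fact m)

lemma aterm_nonneg (m : ℕ) (x : ℝ) : 0 ≤ aterm m x := by
  unfold aterm
  apply div_nonneg
  · exact Even.pow_nonneg (even_two_mul m) x
  · positivity

lemma aterm_cont (m : ℕ) : Continuous (aterm m) := by
  unfold aterm
  exact (continuous_pow (2*m)).div_const _

lemma summable_aterm (x : ℝ) : Summable fun m => aterm m x := by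
  apply Summable.of_nonneg_of_le (fun m => aterm_nonneg m x) (fun m => ?_)
    (Real.summable_pow_div_factorial (x^2))
  unfold aterm
  rw [pow_mul]
  apply div_le_div_of_nonneg_left (by positivity) (by positivity)
  exact le_mul_of_one_le_right (by positivity) (by exact_mod_cast (m+1).factorial_pos)

lemma summable_aterm_norm (x : ℝ) : Summable fun m => ‖aterm m x‖ :=
  (summable_aterm x).congr fun m => by
    rw [Real.norm_eq_abs, abs_of_nonneg (aterm_nonneg m x)]

lemma summable_dterm (x : ℝ) : Summable fun m => dterm m x := by
  rw [← summable_nat_add_iff 1]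
  apply Summable.of_norm
  apply Summable.of_nonneg_of_le (fun m => norm_nonneg _) (fun m => ?_)
    ((Real.summable_pow_div_factorial (x^2)).mul_left (2 * |x|))
  unfold dterm
  have e1 : (x^2)^m = |x|^(2*m) := by
    rw [← sq_abs, ← pow_mul]
  have e2 : 2 * |x| * ((x^2)^m / (m.factorial : ℝ)) = 2 * |x|^(2*m+1) / (m.factorial : ℝ) := by
    rw [e1, pow_succ]
    ring
  rw [e2, norm_div, norm_mul, norm_pow, Real.norm_eq_abs, Real.norm_eq_abs, Real.norm_eq_abs]
  rw [abs_of_nonneg (show (0:ℝ) ≤ 2 * ((m+1:ℕ):ℝ) by positivity),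
    abs_of_nonneg (show (0:ℝ) ≤ ((m+1).factorial : ℝ) * ((m+1+1).factorial : ℝ) by positivity),
    show 2*(m+1) - 1 = 2*m+1 from by omega]
  push_cast
  have hfm : ((m+1).factorial : ℝ) = ((m:ℝ)+1) * (m.factorial : ℝ) := by
    rw [Nat.factorial_succ]; push_cast; ring
  have key : 2 * ((m:ℝ)+1) * |x|^(2*m+1) / (((m+1).factorial : ℝ) * ((m+1+1).factorial : ℝ))
      = 2 * |x|^(2*m+1) / ((m.factorial : ℝ) * ((m+1+1).factorial : ℝ)) := by
    rw [hfm]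
    have : ((m:ℝ)+1) ≠ 0 := by positivity
    field_simp
  rw [key]
  apply div_le_div_of_nonneg_left (by positivity) (by positivity)
  exact le_mul_of_one_le_right (by positivity)
    (by exact_mod_cast (m+1+1).factorial_pos)

lemma hasDerivAt_aterm (m : ℕ) (x : ℝ) : HasDerivAt (aterm m) (dterm m x) x := by
  have := (hasDerivAt_pow (2*m) x).div_const ((m.factorial : ℝ) * ((m+1).factorial : ℝ))
  refine this.congr_deriv ?_
  unfold dterm
  push_cast
  ring

lemma hasDeriv_sum (y : ℝ) :
    HasDerivAt (fun x => ∑' m, aterm m x) (∑' m, dterm m y) y := by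
  have h1 : (0:ℝ) < |y| + 1 := by positivity
  apply hasDerivAt_tsum_of_isPreconnected (u := fun m => dterm m (|y| + 1))
    (summable_dterm (|y| + 1)) Metric.isOpen_ball
    (convex_ball (0:ℝ) (|y|+1)).isPreconnected
    (fun m z _ => hasDerivAt_aterm m z) ?_ ?_ (summable_aterm y) ?_
  · intro m z hz
    have hz' : |z| ≤ |y| + 1 := by
      have := Metric.mem_ball.mp hz
      rw [Real.dist_eq, sub_zero] at this
      linarith
    unfold dterm
    rw [norm_div, norm_mul, norm_pow, Real.norm_eq_abs, Real.norm_eq_abs, Real.norm_eq_abs,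
      abs_of_nonneg (by positivity : (0:ℝ) ≤ 2 * (m:ℝ)),
      abs_of_nonneg (by positivity : (0:ℝ) ≤ (m.factorial : ℝ) * ((m+1).factorial : ℝ))]
    have hpow : |z| ^ (2*m-1) ≤ (|y|+1) ^ (2*m-1) :=
      pow_le_pow_left₀ (abs_nonneg z) hz' _
    have hD : (0:ℝ) < (m.factorial : ℝ) * ((m+1).factorial : ℝ) := by positivity
    exact div_le_div_of_nonneg_right (mul_le_mul_of_nonneg_left hpow (by positivity)) hD.le
  · rw [Metric.mem_ball, Real.dist_eq, sub_zero]
    linarith [le_refl (|y| : ℝ)]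
  · rw [Metric.mem_ball, Real.dist_eq, sub_zero]
    linarith [le_refl (|y| : ℝ)]

lemma dterm_zero_eq (y : ℝ) : dterm 0 y = 0 := by simp [dterm]

lemma dsum_eq (y : ℝ) :
    ∑' m, dterm m y
      = ∑' k : ℕ, (catalan (k+1) : ℝ) * y ^ (2*k+1) / ((2*k+1).factorial : ℝ) := by
  rw [(summable_dterm y).tsum_eq_zero_add, dterm_zero_eq, zero_add]
  apply tsum_congr
  intro k
  unfold dterm
  have hcat := cat_fact_real (k+1)
  rw [show 2*(k+1) = (2*k+1)+1 from by omega, Nat.factorial_succ (2*k+1)] at hcat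
  push_cast at hcat
  rw [show 2*(k+1) - 1 = 2*k+1 from by omega]
  have c1 : ((k+1).factorial : ℝ) ≠ 0 := by positivity
  have c2 : ((k+1+1).factorial : ℝ) ≠ 0 := by positivity
  have c3 : (((2*k+1)).factorial : ℝ) ≠ 0 := by positivity
  field_simp
  push_cast
  linear_combination (-(y ^ (2*k+1))) * hcat

lemma integral_aterm_mul (m n : ℕ) (y : ℝ) :
    (∫ x in (0:ℝ)..y, aterm m x * aterm n (y - x))
      = (catalan m : ℝ) * (catalan n : ℝ)
        * (y ^ (2*(m+n)+1) / (((2*(m+n)+1)).factorial : ℝ)) := by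
  have hC : ∀ x : ℝ, aterm m x * aterm n (y - x)
      = (((m.factorial : ℝ) * ((m+1).factorial : ℝ)
          * ((n.factorial : ℝ) * ((n+1).factorial : ℝ)))⁻¹)
        * (x ^ (2*m) * (y - x) ^ (2*n)) := by
    intro x
    unfold aterm
    rw [div_mul_div_comm, div_eq_inv_mul]
  simp only [hC]
  rw [intervalIntegral.integral_const_mul, beta_mono (2*m) (2*n) y,
    show 2*m + 2*n + 1 = 2*(m+n)+1 from by omega]
  have hm := cat_fact_real m
  have hn := cat_fact_real n
  have hmn : ((2*m).factorial : ℝ) * ((2*n).factorial : ℝ)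
      = ((catalan m : ℝ) * (catalan n : ℝ))
        * (((m.factorial : ℝ) * ((m+1).factorial : ℝ))
          * ((n.factorial : ℝ) * ((n+1).factorial : ℝ))) := by
    rw [← hm, ← hn]; ring
  have c1 : (m.factorial : ℝ) ≠ 0 := by positivity
  have c2 : ((m+1).factorial : ℝ) ≠ 0 := by positivity
  have c3 : (n.factorial : ℝ) ≠ 0 := by positivity
  have c4 : ((n+1).factorial : ℝ) ≠ 0 := by positivity
  have c5 : (((2*(m+n)+1)).factorial : ℝ) ≠ 0 := by positivity
  field_simp
  linear_combination (y ^ (2*(m+n)+1)) * hmn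

lemma conv_eq (y : ℝ) (hy : 0 ≤ y) :
    (∫ x in (0:ℝ)..y, (∑' m, aterm m x) * (∑' n, aterm n (y - x)))
      = ∑' k : ℕ, (catalan (k+1) : ℝ) * y ^ (2*k+1) / ((2*k+1).factorial : ℝ) := by
  have hprod : ∀ x : ℝ, (∑' m, aterm m x) * (∑' n, aterm n (y - x))
      = ∑' p : ℕ × ℕ, aterm p.1 x * aterm p.2 (y - x) := fun x =>
    tsum_mul_tsum_of_summable_norm (summable_aterm_norm x) (summable_aterm_norm (y - x))
  rw [intervalIntegral.integral_of_le hy]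
  simp only [hprod]
  have hFc : ∀ p : ℕ × ℕ, Continuous fun x => aterm p.1 x * aterm p.2 (y - x) := fun p =>
    (aterm_cont p.1).mul ((aterm_cont p.2).comp (continuous_const.sub continuous_id))
  have hFint : ∀ p : ℕ × ℕ,
      IntegrableOn (fun x => aterm p.1 x * aterm p.2 (y - x)) (Set.Ioc 0 y) volume :=
    fun p => (hFc p).integrableOn_Ioc
  have hbound : ∀ p : ℕ × ℕ, (∫ x in Set.Ioc (0:ℝ) y, ‖aterm p.1 x * aterm p.2 (y - x)‖)
      ≤ y * (aterm p.1 y * aterm p.2 y) := by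
    intro p
    have h1 : ∀ x ∈ Set.Ioc (0:ℝ) y,
        ‖aterm p.1 x * aterm p.2 (y - x)‖ ≤ aterm p.1 y * aterm p.2 y := by
      intro x hx
      rw [Real.norm_eq_abs, abs_of_nonneg (mul_nonneg (aterm_nonneg _ _) (aterm_nonneg _ _))]
      have hx1 : (0:ℝ) ≤ x := le_of_lt hx.1
      have hx2 : x ≤ y := hx.2
      apply mul_le_mul ?_ ?_ (aterm_nonneg _ _) (aterm_nonneg _ _)
      · unfold aterm
        exact div_le_div_of_nonneg_right (pow_le_pow_left₀ hx1 hx2 _) (by positivity)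
      · unfold aterm
        exact div_le_div_of_nonneg_right
          (pow_le_pow_left₀ (by linarith : (0:ℝ) ≤ y - x) (by linarith : y - x ≤ y) _)
          (by positivity)
    calc (∫ x in Set.Ioc (0:ℝ) y, ‖aterm p.1 x * aterm p.2 (y - x)‖)
        ≤ ∫ _x in Set.Ioc (0:ℝ) y, (aterm p.1 y * aterm p.2 y) := by
          exact setIntegral_mono_on ((hFint p).norm)
            (integrableOn_const measure_Ioc_lt_top.ne) measurableSet_Ioc h1
      _ = y * (aterm p.1 y * aterm p.2 y) := by
          rw [setIntegral_const, Real.volume_real_Ioc_of_le hy, smul_eq_mul, sub_zero]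
  have hsumInt : Summable fun p : ℕ × ℕ =>
      ∫ x in Set.Ioc (0:ℝ) y, ‖aterm p.1 x * aterm p.2 (y - x)‖ := by
    apply Summable.of_nonneg_of_le (fun p => integral_nonneg fun x => norm_nonneg _) hbound
    exact (((summable_aterm y).mul_of_nonneg (summable_aterm y)
      (fun m => aterm_nonneg m y) (fun n => aterm_nonneg n y)).mul_left y)
  have hswap := MeasureTheory.hasSum_integral_of_summable_integral_norm
    (μ := volume.restrict (Set.Ioc 0 y)) hFint hsumInt
  rw [← hswap.tsum_eq]
  have hval : ∀ p : ℕ × ℕ, (∫ x in Set.Ioc (0:ℝ) y, aterm p.1 x * aterm p.2 (y - x))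
      = (catalan p.1 : ℝ) * (catalan p.2 : ℝ)
        * (y ^ (2*(p.1+p.2)+1) / (((2*(p.1+p.2)+1)).factorial : ℝ)) := by
    intro p
    rw [← intervalIntegral.integral_of_le hy, integral_aterm_mul]
  rw [tsum_congr hval]
  set G : ℕ × ℕ → ℝ := fun p => (catalan p.1 : ℝ) * (catalan p.2 : ℝ)
      * (y ^ (2*(p.1+p.2)+1) / (((2*(p.1+p.2)+1)).factorial : ℝ)) with hG
  have hsum2 : Summable G := hswap.summable.congr hval
  rw [← (Finset.HasAntidiagonal.sigmaAntidiagonalEquivProd (A := ℕ)).tsum_eq G]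
  have hsum3 : Summable (fun c : (Σ n : ℕ, {x // x ∈ Finset.HasAntidiagonal.antidiagonal n}) =>
      G (Finset.HasAntidiagonal.sigmaAntidiagonalEquivProd c)) :=
    (Finset.HasAntidiagonal.sigmaAntidiagonalEquivProd.summable_iff).mpr hsum2
  rw [hsum3.tsum_sigma]
  apply tsum_congr
  intro k
  have hinner : ∀ c : {x // x ∈ Finset.HasAntidiagonal.antidiagonal k},
      G (Finset.HasAntidiagonal.sigmaAntidiagonalEquivProd ⟨k, c⟩)
        = (catalan (c : ℕ × ℕ).1 : ℝ) * (catalan (c : ℕ × ℕ).2 : ℝ)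
          * (y ^ (2*k+1) / ((2*k+1).factorial : ℝ)) := by
    intro c
    have hmem := Finset.HasAntidiagonal.mem_antidiagonal.mp c.2
    simp only [Finset.HasAntidiagonal.sigmaAntidiagonalEquivProd_apply, hG]
    rw [hmem]
  rw [tsum_congr hinner]
  rw [Finset.tsum_subtype (Finset.HasAntidiagonal.antidiagonal k)
    (fun p : ℕ × ℕ => (catalan p.1 : ℝ) * (catalan p.2 : ℝ)
      * (y ^ (2*k+1) / ((2*k+1).factorial : ℝ)))]
  rw [← Finset.sum_mul]
  have hc : ((catalan (k+1) : ℝ)) = ∑ ij ∈ Finset.HasAntidiagonal.antidiagonal k,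
      (catalan ij.1 : ℝ) * (catalan ij.2 : ℝ) := by
    exact_mod_cast congrArg (Nat.cast (R := ℝ)) (catalan_succ' k)
  rw [← hc, mul_div_assoc]

/-- The convolution identity `f ∗ f = f'` for `f(x) = ∑ x^{2m}/(m!(m+1)!)`. -/
theorem stmt_4 (f : ℝ → ℝ)
    (hf : ∀ x : ℝ, f x =
      ∑' m : ℕ, x ^ (2 * m) / ((Nat.factorial m : ℝ) * (Nat.factorial (m + 1) : ℝ)))
    (y : ℝ) :
    (∫ x in (0:ℝ)..y, f x * f (y - x)) = deriv f y := by
  have hfeq : f = fun x => ∑' m, aterm m x := funext fun x => hf x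
  rw [hfeq, (hasDeriv_sum y).deriv, dsum_eq]
  rcases le_or_gt 0 y with h | h
  · exact conv_eq y h
  · have h1 := conv_eq (-y) (by linarith)
    have heven : ∀ t : ℝ, (∑' m, aterm m (-t)) = ∑' m, aterm m t := fun t =>
      tsum_congr fun m => by unfold aterm; rw [Even.neg_pow (even_two_mul m)]
    have hcomp := intervalIntegral.integral_comp_neg (a := 0) (b := -y)
      (fun x => (∑' m, aterm m x) * (∑' n, aterm n (y - x)))
    rw [neg_neg, neg_zero] at hcomp
    have e3 : ∀ x : ℝ, (∑' m, aterm m (-x)) * (∑' n, aterm n (y - -x))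
        = (∑' m, aterm m x) * (∑' n, aterm n ((-y) - x)) := fun x => by
      rw [heven x, show y - -x = -((-y) - x) from by ring, heven ((-y) - x)]
    simp only [e3] at hcomp
    rw [h1] at hcomp
    have hsym : (∫ x in y..(0:ℝ), (fun x => (∑' m, aterm m x) * (∑' n, aterm n (y - x))) x)
        = -(∫ x in (0:ℝ)..y, (∑' m, aterm m x) * (∑' n, aterm n (y - x))) :=
      intervalIntegral.integral_symm 0 y
    rw [hsym] at hcomp
    have hodd : (∑' k : ℕ, (catalan (k+1) : ℝ) * (-y) ^ (2*k+1) / ((2*k+1).factorial : ℝ))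
        = - ∑' k : ℕ, (catalan (k+1) : ℝ) * y ^ (2*k+1) / ((2*k+1).factorial : ℝ) := by
      rw [← tsum_neg]
      apply tsum_congr
      intro k
      rw [Odd.neg_pow ⟨k, by ring⟩]
      ring
    rw [hodd] at hcomp
    linarith [hcomp]
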